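/- Let $1 < p < N$, $\mu \in (0, p)$, $N/p < q < \min\{N, N/\mu\}$, and $0 < t < q(p^*_\mu - 1)$. Define $p^* = \frac{Np}{N-p}$, $p^*_\mu = \frac{p(N-\mu)}{N-p}$, $q^*$ by $1/q^* = 1/q - 1/N$, and $\theta = \dfrac{\frac{1}{p^*} - \frac{1}{t} + \frac{\mu q}{N t}}{\frac{1}{p} - \frac{1}{q^*(p-1)}}$. Then $\frac{\theta t}{q(p-1)} < 1$. -/

import Mathlib

theorem stmt_13 (N p μ q t qs : ℝ) (hp : 1 < p) (hpN : p < N)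
    (hμ0 : 0 < μ) (hμp : μ < p)
    (hq1 : N / p < q) (hq2 : q < min N (N / μ))
    (ht0 : 0 < t) (ht1 : t < q * (p * (N - μ) / (N - p) - 1))
    (hqs : 1 / qs = 1 / q - 1 / N) :
    ((1 / (N * p / (N - p)) - 1 / t + μ * q / (N * t)) /
          (1 / p - 1 / (qs * (p - 1)))) * t / (q * (p - 1)) < 1 := by
  have hN : 1 < N := lt_trans hp hpN
  have hp0 : 0 < p := by linarith
  have hN0 : 0 < N := by linarith
  have hNp : 0 < N - p := by linarith
  have hqN : q < N := lt_of_lt_of_le hq2 (min_le_left _ _)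
  have hq0 : 0 < q := lt_trans (div_pos hN0 hp0) hq1
  have hp1 : 0 < p - 1 := by linarith
  have hNq : 0 < N - q := by linarith
  have hq1' : 1 < q := by
    have : N / p < N / 1 := by
      apply div_lt_div_of_pos_left hN0 (by norm_num) hp
    have h2 : N / 1 = N := by norm_num
    nlinarith [div_pos hN0 hp0, (div_lt_iff₀ hp0).mp hq1]
  have hNpq : N < p * q := by
    have := (div_lt_iff₀ hp0).mp hq1
    nlinarith
  -- value of qs
  have hc : 0 < 1 / q - 1 / N := by
    rw [sub_pos, div_lt_div_iff₀ hN0 hq0]; linarith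
  have hqsv : qs = (1 / q - 1 / N)⁻¹ := by
    rw [← hqs, one_div, inv_inv]
  have h1 : 1 / (qs * (p - 1)) = (1 / q - 1 / N) / (p - 1) := by
    rw [hqsv]
    field_simp
  -- the denominator D is positive
  have hD : 0 < 1 / p - 1 / (qs * (p - 1)) := by
    rw [h1, sub_pos, div_lt_div_iff₀ hp1 hp0]
    have key : (1 / q - 1 / N) * p * (q * N) < 1 * (p - 1) * (q * N) := by
      have e : (1 / q - 1 / N) * p * (q * N) = p * (N - q) := by
        field_simp
      rw [e]
      nlinarith [mul_pos (mul_pos hN0 hp1) (sub_pos.mpr hq1')]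
    have hqN0 : 0 < q * N := by positivity
    exact lt_of_mul_lt_mul_right key (le_of_lt hqN0)
  have hqp1 : 0 < q * (p - 1) := by positivity
  -- main reduction
  rw [div_lt_one hqp1, div_mul_eq_mul_div, div_lt_iff₀ hD, h1]
  -- the hypothesis cleared of denominators
  have hrhs : q * (p * (N - μ) / (N - p) - 1) * (N - p) = q * (p * (N - μ) - (N - p)) := by
    field_simp
  have ht1' : t * (N - p) < q * (p * (N - μ) - (N - p)) := by
    have h := mul_lt_mul_of_pos_right ht1 hNp
    rw [hrhs] at h
    exact h
  -- difference of the two sides as a single fraction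
  have hBA : q * (p - 1) * (1 / p - (1 / q - 1 / N) / (p - 1))
      - (1 / (N * p / (N - p)) - 1 / t + μ * q / (N * t)) * t
      = (q * (p * (N - μ) - (N - p)) - t * (N - p)) / (N * p) := by
    field_simp
    ring
  rw [← sub_pos, hBA]
  exact div_pos (by linarith) (by positivity)
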